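/- Let λ be a nonzero real number and m a positive integer. For every n ≥ 0, the identity φ_{n,λ/m}(x/m) = m^{−n} Σ_{k=0}^{n} C(n,k) (−1)_{n−k,λ} d_{m,λ}(k,x) holds as polynomials in x, where C(n,k) is the binomial coefficient and (−1)_{j,λ} denotes the λ-falling factorial evaluated at −1. -/

import Mathlib

open Nat PowerSeries Finset

noncomputable section

/-- λ-falling factorial (x)_{n,λ} = x(x−λ)···(x−(n−1)λ). -/
def dfall (l x : ℝ) (n : ℕ) : ℝ := ∏ i ∈ range n, (x - i * l)

/-- degenerate exponential e_λ^x(t) = Σ (x)_{n,λ} t^n/n! as a formal power series. -/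
def degExp (l x : ℝ) : PowerSeries ℝ := PowerSeries.mk fun n => dfall l x n / n !

/-- degenerate logarithm log_λ(1+t) = Σ_{n≥1} (∏_{j=1}^{n−1}(λ−j)) t^n/n!. -/
def degLog (l : ℝ) : PowerSeries ℝ :=
  PowerSeries.mk fun n => if n = 0 then 0 else (∏ j ∈ range (n - 1), (l - (j + 1))) / n !

/-- composition Σ_k a_k f^k, valid when f has zero constant term. -/
def psComp (a : ℕ → ℝ) (f : PowerSeries ℝ) : PowerSeries ℝ :=
  PowerSeries.mk fun n => ∑ k ∈ range (n + 1), a k * PowerSeries.coeff n (f ^ k)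

/-- e_λ^x(f), the degenerate exponential composed with f (f with zero constant term). -/
def degExpComp (l x : ℝ) (f : PowerSeries ℝ) : PowerSeries ℝ :=
  psComp (fun k => dfall l x k / k !) f

/-- degenerate Stirling numbers of the second kind. -/
def dS2 (l : ℝ) (n k : ℕ) : ℝ :=
  (n ! : ℝ) / k ! * PowerSeries.coeff n ((degExp l 1 - 1) ^ k)

/-- degenerate Stirling numbers of the first kind. -/
def dS1 (l : ℝ) (n k : ℕ) : ℝ :=
  (n ! : ℝ) / k ! * PowerSeries.coeff n (degLog l ^ k)

/-- (signed) Stirling numbers of the first kind: coefficients of x(x-1)···(x-n+1). -/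
def sS1 (n k : ℕ) : ℝ := (descPochhammer ℝ n).coeff k

/-- fully degenerate Bell polynomial φ_{n,λ}(x). -/
def dBell (l : ℝ) (n : ℕ) (x : ℝ) : ℝ := ∑ k ∈ range (n + 1), dS2 l n k * dfall l x k

/-- degenerate Whitney numbers of the second kind. -/
def dW (m : ℕ) (l : ℝ) (n k : ℕ) : ℝ :=
  (n ! : ℝ) / k ! *
    PowerSeries.coeff n (degExp l 1 * ((degExp l (m : ℝ) - 1) * PowerSeries.C (R := ℝ) (1 / m)) ^ k)

/-- fully degenerate Dowling polynomial d_{m,λ}(n,x). -/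
def dDowling (m : ℕ) (l : ℝ) (n : ℕ) (x : ℝ) : ℝ :=
  ∑ k ∈ range (n + 1), dW m l n k * dfall l x k

/-- division of a power series by t (coefficient shift). -/
def divT (f : PowerSeries ℝ) : PowerSeries ℝ :=
  PowerSeries.mk fun n => PowerSeries.coeff (n + 1) f

/-- degenerate Bernoulli polynomials β_{n,λ}(x): (t/(e_λ(t)−1)) e_λ^x(t) = Σ β_{n,λ}(x) tⁿ/n!. -/
def dBernoulliPoly (l : ℝ) (n : ℕ) (x : ℝ) : ℝ :=
  (n ! : ℝ) * PowerSeries.coeff n ((divT (degExp l 1 - 1))⁻¹ * degExp l x)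

/-- the λ-falling factorial polynomial (x)_{k,λ}. -/
def dfallPoly (l : ℝ) (k : ℕ) : Polynomial ℝ :=
  ∏ i ∈ range k, (Polynomial.X - Polynomial.C (i * l))

/-- degenerate poly-Bell polynomials B^{(r)}_{n,λ}(x). -/
def dPolyBell (r : ℤ) (l : ℝ) (n : ℕ) (x : ℝ) : ℝ :=
  (n ! : ℝ) * PowerSeries.coeff n
    (divT (psComp (fun k => if k = 0 then 0 else dfall l 1 k / ((k - 1)! * (k : ℝ) ^ r))
        (degLog l)) *
      (divT (degExp l 1 - 1))⁻¹ * degExp l x)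

/-- degenerate Bernoulli polynomials of the second kind b_{n,λ}(x). -/
def dBern2 (l : ℝ) (n : ℕ) (x : ℝ) : ℝ :=
  (n ! : ℝ) *
    PowerSeries.coeff n ((divT (degLog l))⁻¹ * PowerSeries.mk fun j => dfall 1 x j / j !)


lemma dfall_zero (l x : ℝ) : dfall l x 0 = 1 := by simp [dfall]

lemma dfall_succ (l x : ℝ) (n : ℕ) : dfall l x (n+1) = dfall l x n * (x - n*l) := by
  simp [dfall, prod_range_succ]

lemma dfall_add (l x y : ℝ) (n : ℕ) :
    dfall l (x+y) n = ∑ k ∈ range (n+1), (n.choose k : ℝ) * dfall l x k * dfall l y (n-k) := by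
  induction n with
  | zero => simp [dfall]
  | succ n ih =>
    have split : ∀ k ∈ range (n+1),
        (n.choose k : ℝ) * dfall l x k * dfall l y (n-k) * (x + y - n*l)
          = (n.choose k : ℝ) * dfall l x (k+1) * dfall l y (n-k)
            + (n.choose k : ℝ) * dfall l x k * dfall l y (n-k+1) := by
      intro k hk
      have hk' : k ≤ n := Nat.lt_succ_iff.mp (mem_range.mp hk)
      have hc : ((n-k : ℕ) : ℝ) = (n:ℝ) - k := by
        rw [Nat.cast_sub hk']
      rw [dfall_succ, dfall_succ, hc]
      ring
    rw [dfall_succ, ih, Finset.sum_mul, Finset.sum_congr rfl split, Finset.sum_add_distrib]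
    have hB : ∑ k ∈ range (n+1), (n.choose k : ℝ) * dfall l x k * dfall l y (n-k+1)
        = ∑ k ∈ range (n+1), (n.choose k : ℝ) * dfall l x k * dfall l y (n+1-k) := by
      refine Finset.sum_congr rfl fun k hk => ?_
      have hk' : k ≤ n := Nat.lt_succ_iff.mp (mem_range.mp hk)
      rw [Nat.sub_add_comm hk']
    rw [hB]
    rw [show (n+1+1) = (n+1)+1 from rfl, Finset.sum_range_succ' (fun k => ((n+1).choose k : ℝ) * dfall l x k * dfall l y (n+1-k))]
    have hsplit2 : ∀ i ∈ range (n+1),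
        (((n+1).choose (i+1) : ℕ) : ℝ) * dfall l x (i+1) * dfall l y (n+1-(i+1))
          = (n.choose i : ℝ) * dfall l x (i+1) * dfall l y (n-i)
            + (n.choose (i+1) : ℝ) * dfall l x (i+1) * dfall l y (n-i) := by
      intro i _
      rw [Nat.choose_succ_succ, Nat.cast_add]
      have : n + 1 - (i+1) = n - i := by omega
      rw [this]; ring
    rw [Finset.sum_congr rfl hsplit2, Finset.sum_add_distrib]
    have hB2 : (∑ i ∈ range (n+1), (n.choose (i+1) : ℝ) * dfall l x (i+1) * dfall l y (n-i))
        + ((n+1).choose 0 : ℝ) * dfall l x 0 * dfall l y (n+1-0)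
        = ∑ k ∈ range (n+1), (n.choose k : ℝ) * dfall l x k * dfall l y (n+1-k) := by
      rw [Finset.sum_range_succ' (fun k => (n.choose k : ℝ) * dfall l x k * dfall l y (n+1-k)),
        Finset.sum_range_succ (fun i => (n.choose (i+1) : ℝ) * dfall l x (i+1) * dfall l y (n-i))]
      simp only [Nat.choose_succ_self, Nat.cast_zero, zero_mul, add_zero]
      congr 1
      · refine Finset.sum_congr rfl fun i _ => ?_
        congr 2
        omega
      · simp
    rw [add_assoc, hB2]

lemma coeff_degExp (l x : ℝ) (n : ℕ) : coeff n (degExp l x) = dfall l x n / n ! := by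
  simp [degExp]

lemma degExp_mul (l x y : ℝ) : degExp l x * degExp l y = degExp l (x+y) := by
  ext n
  rw [coeff_mul, Finset.Nat.sum_antidiagonal_eq_sum_range_succ_mk, coeff_degExp, dfall_add,
    Finset.sum_div]
  refine Finset.sum_congr rfl fun k hk => ?_
  have hk' : k ≤ n := Nat.lt_succ_iff.mp (mem_range.mp hk)
  rw [coeff_degExp, coeff_degExp]
  have h1 : (k ! : ℝ) ≠ 0 := Nat.cast_ne_zero.mpr (Nat.factorial_ne_zero k)
  have h2 : ((n-k) ! : ℝ) ≠ 0 := Nat.cast_ne_zero.mpr (Nat.factorial_ne_zero _)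
  have h3 : (n ! : ℝ) ≠ 0 := Nat.cast_ne_zero.mpr (Nat.factorial_ne_zero n)
  rw [Nat.cast_choose ℝ hk']
  field_simp

lemma degExp_zero (l : ℝ) : degExp l 0 = 1 := by
  ext n
  rw [coeff_degExp, coeff_one]
  cases n with
  | zero => simp [dfall]
  | succ n =>
    simp only [Nat.succ_ne_zero, if_false]
    have : dfall l 0 (n+1) = 0 := by
      simp [dfall, Finset.prod_range_succ']
    rw [this, zero_div]

lemma degExp_neg_one_mul (l : ℝ) : degExp l 1 * degExp l (-1) = 1 := by
  rw [degExp_mul]; norm_num [degExp_zero]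

lemma dfall_div (l x M : ℝ) (hM : M ≠ 0) (n : ℕ) :
    dfall (l/M) (x/M) n = M⁻¹^n * dfall l x n := by
  unfold dfall
  rw [show M⁻¹^n = ∏ _i ∈ range n, M⁻¹ by rw [Finset.prod_const, Finset.card_range],
    ← Finset.prod_mul_distrib]
  refine Finset.prod_congr rfl fun i _ => ?_
  field_simp

lemma degExp_div (l x M : ℝ) (hM : M ≠ 0) :
    degExp (l/M) (x/M) = rescale M⁻¹ (degExp l x) := by
  ext n
  rw [coeff_rescale, coeff_degExp, coeff_degExp, dfall_div l x M hM, mul_div_assoc]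


lemma coeff_mul_pow_eq_zero {f g : PowerSeries ℝ} (hg : constantCoeff g = 0)
    {k j : ℕ} (hkj : k < j) : coeff k (f * g ^ j) = 0 := by
  obtain ⟨t, ht⟩ : (X : PowerSeries ℝ)^j ∣ f * g ^ j :=
    Dvd.dvd.mul_left (pow_dvd_pow_of_dvd (X_dvd_iff.mpr hg) j) f
  rw [ht, coeff_mul]
  refine Finset.sum_eq_zero fun p hp => ?_
  rw [coeff_X_pow]
  have hp1 : p.1 ≠ j := by
    have := Finset.HasAntidiagonal.mem_antidiagonal.mp hp; omega
  simp [hp1]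

theorem stmt14 (l : ℝ) (hl : l ≠ 0) (m : ℕ) (hm : 0 < m) (n : ℕ) (x : ℝ) :
    dBell (l / m) n (x / m) =
      ((m : ℝ) ^ n)⁻¹ *
        ∑ k ∈ range (n + 1), n.choose k * dfall l (-1) (n - k) * dDowling m l k x := by
  have hM : (m : ℝ) ≠ 0 := Nat.cast_ne_zero.mpr hm.ne'
  set M : ℝ := (m : ℝ) with hMdef
  set G : PowerSeries ℝ := (degExp l M - 1) * C (R := ℝ) (1/M) with hGdef
  have hGc : constantCoeff G = 0 := by
    have : constantCoeff (degExp l M) = 1 := by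
      have := coeff_degExp l M 0
      simpa [dfall] using this
    simp [hGdef, this]
  have hW0 : ∀ k j : ℕ, k < j → dW m l k j = 0 := by
    intro k j hkj
    unfold dW
    rw [coeff_mul_pow_eq_zero hGc hkj, mul_zero]
  have hL : dBell (l / M) n (x / M) =
      (M ^ n)⁻¹ * ∑ k ∈ range (n+1), (n ! : ℝ) / k ! * coeff n (G ^ k) * dfall l x k := by
    unfold dBell dS2
    rw [Finset.mul_sum]
    refine Finset.sum_congr rfl fun k _ => ?_
    have h1 : degExp (l/M) 1 = rescale M⁻¹ (degExp l M) := by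
      rw [← degExp_div l M M hM, div_self hM]
    have h2 : coeff n ((degExp (l/M) 1 - 1) ^ k)
        = M⁻¹ ^ n * coeff n ((degExp l M - 1) ^ k) := by
      rw [h1, show rescale M⁻¹ (degExp l M) - 1 = rescale M⁻¹ (degExp l M - 1) by
          rw [map_sub, map_one], ← map_pow, coeff_rescale]
    have h3 : coeff n (G ^ k) = coeff n ((degExp l M - 1) ^ k) * (1/M) ^ k := by
      rw [hGdef, mul_pow, ← map_pow, coeff_mul_C]
    rw [h2, dfall_div l x M hM, h3]
    simp only [one_div, inv_pow]
    ring
  have hR : ∑ k ∈ range (n + 1), (n.choose k : ℝ) * dfall l (-1) (n - k) * dDowling m l k x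
      = ∑ j ∈ range (n+1), (n ! : ℝ) / j ! * coeff n (G ^ j) * dfall l x j := by
    unfold dDowling
    have hext : ∀ k ∈ range (n+1),
        (n.choose k : ℝ) * dfall l (-1) (n-k) * ∑ j ∈ range (k+1), dW m l k j * dfall l x j
        = ∑ j ∈ range (n+1),
            (n.choose k : ℝ) * dfall l (-1) (n-k) * (dW m l k j * dfall l x j) := by
      intro k hk
      rw [← Finset.mul_sum]
      congr 1
      refine Finset.sum_subset ?_ ?_
      · intro j hj
        simp only [mem_range] at *
        omega
      · intro j _ hj
        simp only [mem_range, not_lt] at hj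
        rw [hW0 k j (by omega), zero_mul]
    rw [Finset.sum_congr rfl hext, Finset.sum_comm]
    refine Finset.sum_congr rfl fun j hj => ?_
    have key : ∑ k ∈ range (n+1), (n.choose k : ℝ) * dfall l (-1) (n-k) * dW m l k j
        = (n ! : ℝ) / j ! * coeff n (G ^ j) := by
      have step : ∀ k ∈ range (n+1), (n.choose k : ℝ) * dfall l (-1) (n-k) * dW m l k j
          = (n ! : ℝ) / j ! *
              (coeff k (degExp l 1 * G ^ j) * coeff (n-k) (degExp l (-1))) := by
        intro k hk
        have hk' : k ≤ n := Nat.lt_succ_iff.mp (mem_range.mp hk)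
        unfold dW
        rw [coeff_degExp, Nat.cast_choose ℝ hk']
        have h1 : (k ! : ℝ) ≠ 0 := Nat.cast_ne_zero.mpr (Nat.factorial_ne_zero k)
        have h2 : ((n-k)! : ℝ) ≠ 0 := Nat.cast_ne_zero.mpr (Nat.factorial_ne_zero _)
        have h3 : (j ! : ℝ) ≠ 0 := Nat.cast_ne_zero.mpr (Nat.factorial_ne_zero j)
        field_simp
        ring
      rw [Finset.sum_congr rfl step, ← Finset.mul_sum]
      congr 1
      have hco : coeff n ((degExp l 1 * G ^ j) * degExp l (-1))
          = ∑ k ∈ range (n+1),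
              coeff k (degExp l 1 * G ^ j) * coeff (n-k) (degExp l (-1)) := by
        rw [coeff_mul, Finset.Nat.sum_antidiagonal_eq_sum_range_succ_mk]
      rw [← hco, mul_right_comm, degExp_neg_one_mul, one_mul]
    calc ∑ k ∈ range (n+1),
            (n.choose k : ℝ) * dfall l (-1) (n-k) * (dW m l k j * dfall l x j)
        = (∑ k ∈ range (n+1), (n.choose k : ℝ) * dfall l (-1) (n-k) * dW m l k j)
            * dfall l x j := by
          rw [Finset.sum_mul]; exact Finset.sum_congr rfl fun k _ => by ring
      _ = (n ! : ℝ) / j ! * coeff n (G ^ j) * dfall l x j := by rw [key]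
  rw [hL, hR]


end
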